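/- Let a < 0, α > 0, γ > 0. Any optimal solution (x*, y*) of the problem: minimize x + αy + 2aα over x ≥ 0, y ≥ 0 subject to 2ax + 1 ≥ 0, the 2×2 matrix [[2ay − γ, y], [y, −1]] being negative semidefinite, and the 2×2 matrix [[x, 1], [1, y]] being positive semidefinite, satisfies x* > 0, y* > 0and x*·y* = 1 (equivalently, the matrix [[x*,1],[1,y*]] has rank 1). -/

import Mathlib

/-- Feasibility for the scalar SDP relaxation of the time-invariant
channel gain problem. -/
def ScalarSDPFeasible (a γ x y : ℝ) : Prop :=
  0 ≤ x ∧ 0 ≤ y ∧ 0 ≤ 2 * a * x + 1 ∧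
    (-(!![2 * a * y - γ, y; y, -1])).PosSemidef ∧
    (!![x, 1; 1, y]).PosSemidef

lemma quad_of_psd (u v : ℝ) (hP : (!![u, 1; 1, v]).PosSemidef) :
    ∀ z : Fin 2 → ℝ, 0 ≤ u * z 0 * z 0 + z 1 * z 0 + (z 0 * z 1 + v * z 1 * z 1) := by
  intro z
  have := hP.dotProduct_mulVec_nonneg z
  simp [Matrix.mulVec, dotProduct, Fin.sum_univ_two] at this
  linarith

lemma psd_two (u v : ℝ) (hu : 0 ≤ u) (hv : 0 ≤ v) (hd : 1 ≤ u * v) :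
    (!![u, 1; 1, v]).PosSemidef := by
  refine Matrix.PosSemidef.of_dotProduct_mulVec_nonneg ?_ ?_
  · ext i j; fin_cases i <;> fin_cases j <;> rfl
  · intro z
    simp [Matrix.mulVec, dotProduct, Fin.sum_univ_two]
    have hv0 : 0 < v := by nlinarith
    nlinarith [sq_nonneg (z 0 + v * z 1), mul_self_nonneg (z 0)]

theorem stmt_11 (a α γ x y : ℝ) (ha : a < 0) (hα : 0 < α) (hγ : 0 < γ)
    (hfeas : ScalarSDPFeasible a γ x y)
    (hopt : ∀ x' y' : ℝ, ScalarSDPFeasible a γ x' y' →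
      x + α * y + 2 * a * α ≤ x' + α * y' + 2 * a * α) :
    0 < x ∧ 0 < y ∧ x * y = 1 := by
  obtain ⟨hx, hy, hlin, hN, hP⟩ := hfeas
  have hq := quad_of_psd x y hP
  have hy0 : 0 < y := by
    rcases lt_or_eq_of_le hy with h | h
    · exact h
    · exfalso
      have h1 := hq ![1, -x]
      have h2 := hq ![1, -1]
      simp [← h] at h1 h2
      nlinarith
  have hxy : 1 ≤ x * y := by
    have h1 := hq ![y, -1]
    simp at h1
    nlinarith
  have hx0 : 0 < x := by nlinarith
  refine ⟨hx0, hy0, ?_⟩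
  by_contra hne
  have hgt : 1 < x * y := lt_of_le_of_ne hxy (fun h => hne h.symm)
  have hx' : 1/y < x := by
    rw [div_lt_iff₀ hy0]; linarith
  have hfeas' : ScalarSDPFeasible a γ (1/y) y := by
    refine ⟨by positivity, hy, ?_, hN, ?_⟩
    · nlinarith [mul_le_mul_of_nonpos_left (le_of_lt hx') (le_of_lt (by linarith : 2*a < 0))]
    · exact psd_two _ _ (by positivity) hy (by rw [one_div, inv_mul_cancel₀ hy0.ne'])
  have := hopt _ _ hfeas'
  linarith
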